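/- arXiv:1212.4449 — 2 statements merged into one kernel-verified Lean document; each statement's English description precedes it below -/
import Mathlib

section
/- Let a_1, ..., a_n be nonzero vectors in ℝ^d, let S be a circuit of this family, and let M ⊆ {1,...,n} be a subset containing no circuit (i.e. (a_i)_{i∈M} is linearly independent) such that for every i ∈ S with i ∉ M, the set M ∪ {i} contains no circuit. Then span{a_i : i ∈ S} is not contained in span{a_i : i ∈ M}, and consequently the subspace span{a_i : i ∈ M}^⊥ ∩ span{a_i : i ∈ S}^⊥ of ℝ^d has codimension strictly greater than |M|. -/
set_option maxHeartbeats 1000000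

/-- A circuit: a minimal subset of indices whose vectors are linearly dependent. -/
def IsCircuit (R : Type*) [CommRing R] {V : Type*} [AddCommGroup V] [Module R V]
    {n : ℕ} (a : Fin n → V) (S : Finset (Fin n)) : Prop :=
  ¬ LinearIndependent R (fun i : S => a (i : Fin n)) ∧
    ∀ T : Finset (Fin n), T ⊂ S → LinearIndependent R (fun i : T => a (i : Fin n))

/-- The linear functional `x ↦ ∑ j, v j * x j` on `ℝ^d`. -/
noncomputable def dotMap {d : ℕ} (v : Fin d → ℝ) : (Fin d → ℝ) →ₗ[ℝ] ℝ :=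
  ∑ j, v j • LinearMap.proj j

/-- The common annihilator `{x : a_i · x = 0 for all i ∈ T}` of the vectors indexed by `T`. -/
noncomputable def ann {n d : ℕ} (a : Fin n → (Fin d → ℝ)) (T : Finset (Fin n)) :
    Submodule ℝ (Fin d → ℝ) :=
  ⨅ i ∈ T, LinearMap.ker (dotMap (a i))

lemma mem_ann_iff {n d : ℕ} (a : Fin n → (Fin d → ℝ)) (T : Finset (Fin n)) (x : Fin d → ℝ) :
    x ∈ ann a T ↔ ∀ i ∈ T, ∑ j, a i j * x j = 0 := by
  simp [ann, dotMap, Submodule.mem_iInf, LinearMap.mem_ker]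

lemma ann_eq_orth {n d : ℕ} (a : Fin n → (Fin d → ℝ)) (T : Finset (Fin n)) :
    (Submodule.span ℝ ((fun i => WithLp.toLp 2 (a i)) '' (T : Set (Fin n))) :
        Submodule ℝ (EuclideanSpace ℝ (Fin d)))ᗮ
      = (ann a T).comap (WithLp.linearEquiv 2 ℝ (Fin d → ℝ)).toLinearMap := by
  ext x
  rw [Submodule.mem_comap, mem_ann_iff, Submodule.mem_orthogonal]
  rw [Iff.comm]
  constructor
  · intro h u hu
    induction hu using Submodule.span_induction with
    | mem u hu =>
      obtain ⟨i, hi, rfl⟩ := hu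
      simp only [PiLp.inner_apply, RCLike.inner_apply, conj_trivial]
      simpa [mul_comm] using h i hi
    | zero => simp
    | add u v _ _ h1 h2 => rw [inner_add_left, h1, h2, add_zero]
    | smul c u _ h1 => rw [inner_smul_left, h1, mul_zero]
  · intro h i hi
    have := h (WithLp.toLp 2 (a i)) (Submodule.subset_span ⟨i, hi, rfl⟩)
    simpa [PiLp.inner_apply, RCLike.inner_apply, conj_trivial, mul_comm] using this

lemma ann_union {n d : ℕ} (a : Fin n → (Fin d → ℝ)) (S M : Finset (Fin n)) :
    ann a (S ∪ M) = ann a S ⊓ ann a M := by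
  ext x
  simp only [mem_ann_iff, Submodule.mem_inf, Finset.mem_union]
  constructor
  · intro h
    exact ⟨fun i hi => h i (Or.inl hi), fun i hi => h i (Or.inr hi)⟩
  · rintro ⟨h1, h2⟩ i (hi | hi)
    exacts [h1 i hi, h2 i hi]

lemma finrank_ann_add {n d : ℕ} (a : Fin n → (Fin d → ℝ)) (T : Finset (Fin n)) :
    Module.finrank ℝ ↥(Submodule.span ℝ (a '' (T : Set (Fin n)))) +
      Module.finrank ℝ ↥(ann a T) = d := by
  have e1 : Module.finrank ℝ ↥((ann a T).comap (WithLp.linearEquiv 2 ℝ (Fin d → ℝ)).toLinearMap)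
      = Module.finrank ℝ ↥(ann a T) := by
    rw [Submodule.comap_equiv_eq_map_symm]
    exact LinearEquiv.finrank_map_eq _ _
  have e2 : Module.finrank ℝ ↥(Submodule.span ℝ ((fun i => WithLp.toLp 2 (a i)) ''
      (T : Set (Fin n))) : Submodule ℝ (EuclideanSpace ℝ (Fin d)))
      = Module.finrank ℝ ↥(Submodule.span ℝ (a '' (T : Set (Fin n)))) := by
    have : (Submodule.span ℝ ((fun i => WithLp.toLp 2 (a i)) '' (T : Set (Fin n))) :
        Submodule ℝ (EuclideanSpace ℝ (Fin d))) = (Submodule.span ℝ (a '' (T : Set (Fin n)))).map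
        (WithLp.linearEquiv 2 ℝ (Fin d → ℝ)).symm.toLinearMap := by
      rw [Submodule.map_span, Set.image_image]
      rfl
    rw [this]
    exact LinearEquiv.finrank_map_eq _ _
  rw [← e1, ← e2, ← ann_eq_orth a T]
  have := (Submodule.span ℝ ((fun i => WithLp.toLp 2 (a i)) '' (T : Set (Fin n)))
      : Submodule ℝ (EuclideanSpace ℝ (Fin d))).finrank_add_finrank_orthogonal
  rwa [finrank_euclideanSpace_fin] at this

lemma ann_finrank_lt {n d : ℕ} (a : Fin n → (Fin d → ℝ)) (S M : Finset (Fin n))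
    (hnle : ¬ (Submodule.span ℝ (a '' (S : Set (Fin n))) ≤
        Submodule.span ℝ (a '' (M : Set (Fin n)))))
    (hM : LinearIndependent ℝ (fun i : M => a (i : Fin n))) :
    Module.finrank ℝ ↥(ann a S ⊓ ann a M) < d - M.card := by
  -- rank of span of M
  have himg : a '' (M : Set (Fin n)) = Set.range (fun i : M => a (i : Fin n)) :=
    Set.image_eq_range _ _
  have hrankM : Module.finrank ℝ ↥(Submodule.span ℝ (a '' (M : Set (Fin n)))) = M.card := by
    rw [himg, finrank_span_eq_card hM, Fintype.card_coe]
  -- span over union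
  have hunion : Submodule.span ℝ (a '' ((S ∪ M : Finset (Fin n)) : Set (Fin n))) =
      Submodule.span ℝ (a '' (S : Set (Fin n))) ⊔ Submodule.span ℝ (a '' (M : Set (Fin n))) := by
    rw [Finset.coe_union, Set.image_union, Submodule.span_union]
  have hlt : Submodule.span ℝ (a '' (M : Set (Fin n))) <
      Submodule.span ℝ (a '' ((S ∪ M : Finset (Fin n)) : Set (Fin n))) := by
    rw [hunion]
    refine lt_of_le_of_ne le_sup_right fun heq => hnle ?_
    rw [heq]
    exact le_sup_left
  have hltrank := Submodule.finrank_lt_finrank_of_lt hlt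
  have hcard : M.card < d := by
    have h1 : Module.finrank ℝ ↥(Submodule.span ℝ
        (a '' ((S ∪ M : Finset (Fin n)) : Set (Fin n)))) ≤ d := by
      have := Submodule.finrank_le (Submodule.span ℝ
        (a '' ((S ∪ M : Finset (Fin n)) : Set (Fin n))))
      rwa [Module.finrank_fin_fun] at this
    omega
  have hadd := finrank_ann_add a (S ∪ M)
  rw [← ann_union a S M]
  omega

theorem vanishing_lemma_codim {n d : ℕ} (a : Fin n → (Fin d → ℝ))
    (ha : ∀ i, a i ≠ 0) (S M : Finset (Fin n)) (hS : IsCircuit ℝ a S)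
    (hM : LinearIndependent ℝ (fun i : M => a (i : Fin n)))
    (hMS : ∀ i ∈ S, i ∉ M →
      LinearIndependent ℝ (fun i : (insert i M : Finset (Fin n)) => a (i : Fin n))) :
    ¬ (Submodule.span ℝ (a '' (S : Set (Fin n))) ≤
        Submodule.span ℝ (a '' (M : Set (Fin n)))) ∧
      Module.finrank ℝ ↥(ann a S ⊓ ann a M) < d - M.card := by
  classical
  have part1 : ¬ (Submodule.span ℝ (a '' (S : Set (Fin n))) ≤
      Submodule.span ℝ (a '' (M : Set (Fin n)))) := by
    intro hle
    by_cases hSM : ∀ i ∈ S, i ∈ M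
    · exact hS.1 (hM.comp (fun i => ⟨i.1, hSM i.1 i.2⟩)
        (fun i j hij => Subtype.ext (congrArg Subtype.val hij : (i:Fin n) = j)))
    · push_neg at hSM
      obtain ⟨i, hiS, hiM⟩ := hSM
      have h1 : LinearIndependent ℝ
          (fun x : ((insert i M : Finset (Fin n)) : Set (Fin n)) => a (x : Fin n)) :=
        hMS i hiS hiM
      rw [Finset.coe_insert] at h1
      have h2 := ((linearIndepOn_insert (f := a)
        (by simpa using hiM)).1 h1).2
      exact h2 (hle (Submodule.subset_span ⟨i, hiS, rfl⟩))
  exact ⟨part1, ann_finrank_lt a S M part1 hM⟩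
end

section
/- Let E_i = q_i ∂/∂q_i and let S = S^+ ⊔ S^− be a split circuit with corresponding monomial q^{β_S} = ∏_{i∈S^+} q_i / ∏_{i∈S^−} q_i. Then the function f(q,t) = ∏_{i=1}^n (1 + q_i t^{a_i})^ℏ · ∏_j t_j^{−c_j} satisfies the differential relation (∏_{i∈S^+} E_i ∏_{i∈S^−}(ℏ − E_i) − q^{β_S} ∏_{i∈S^+}(ℏ − E_i) ∏_{i∈S^−} E_i) f = 0, where the operators E_i applied to f act as multiplication by ℏ q_i t^{a_i}/(1+q_i t^{a_i}). -/
open Complex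

/-- The monomial `t^{a} = ∏ j, t_j^{a_j}` for `a ∈ ℤ^d`. -/
noncomputable def tmon {d : ℕ} (t : Fin d → ℂ) (a : Fin d → ℤ) : ℂ :=
  ∏ j, t j ^ a j

/-- The (principal branch of the) mirror integrand
`f(q,t) = ∏ i (1 + q_i t^{a_i})^ℏ · ∏ j t_j^{-c_j}`. -/
noncomputable def mirrorF {n d : ℕ} (a : Fin n → Fin d → ℤ) (ℏ : ℂ) (c : Fin d → ℂ)
    (q : Fin n → ℂ) (t : Fin d → ℂ) : ℂ :=
  (∏ i, (1 + q i * tmon t (a i)) ^ ℏ) * ∏ j, t j ^ (-c j)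

lemma tmon_sum {d n : ℕ} (t : Fin d → ℂ) (ht : ∀ j, t j ≠ 0)
    (a : Fin n → Fin d → ℤ) (S : Finset (Fin n)) :
    tmon t (∑ i ∈ S, a i) = ∏ i ∈ S, tmon t (a i) := by
  classical
  induction S using Finset.induction with
  | empty => simp [tmon]
  | insert _ _ h ih =>
    rw [Finset.sum_insert h, Finset.prod_insert h, ← ih]
    simp only [tmon, ← Finset.prod_mul_distrib]
    refine Finset.prod_congr rfl fun j _ => ?_
    simp [zpow_add₀ (ht j)]

/-- The GKZ circuit relation satisfied by the mirror integrand, where the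
operator `E_i = q_i ∂/∂q_i` acts on `f` as multiplication by
`u_i = ℏ q_i t^{a_i} / (1 + q_i t^{a_i})`. -/
theorem mirrorF_gkz_circuit_relation {n d : ℕ} (a : Fin n → Fin d → ℤ)
    (ℏ : ℂ) (c : Fin d → ℂ) (q : Fin n → ℂ) (t : Fin d → ℂ)
    (ht : ∀ j, t j ≠ 0) (hq : ∀ i, q i ≠ 0)
    (hx : ∀ i, 1 + q i * tmon t (a i) ≠ 0)
    (Sp Sm : Finset (Fin n)) (hdisj : Disjoint Sp Sm)
    (hrel : ∑ i ∈ Sp, a i = ∑ i ∈ Sm, a i)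
    (u : Fin n → ℂ)
    (hu : ∀ i, u i = ℏ * (q i * tmon t (a i)) / (1 + q i * tmon t (a i)))
    (qβ : ℂ) (hqβ : qβ = (∏ i ∈ Sp, q i) / ∏ i ∈ Sm, q i) :
    ((∏ i ∈ Sp, u i) * ∏ i ∈ Sm, (ℏ - u i) -
        qβ * ((∏ i ∈ Sp, (ℏ - u i)) * ∏ i ∈ Sm, u i)) * mirrorF a ℏ c q t = 0 := by
  have hsub : ∀ i, ℏ - u i = ℏ / (1 + q i * tmon t (a i)) := by
    intro i
    rw [hu i, eq_div_iff (hx i), sub_mul, div_mul_cancel₀ _ (hx i)]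
    ring
  have key : (∏ i ∈ Sp, q i) * ∏ i ∈ Sp, tmon t (a i) =
      qβ * ((∏ i ∈ Sm, q i) * ∏ i ∈ Sm, tmon t (a i)) := by
    have hqm : (∏ i ∈ Sm, q i) ≠ 0 := Finset.prod_ne_zero_iff.2 fun i _ => hq i
    have htm : tmon t (∑ i ∈ Sp, a i) = tmon t (∑ i ∈ Sm, a i) := by rw [hrel]
    rw [tmon_sum t ht a Sp, tmon_sum t ht a Sm] at htm
    rw [hqβ, htm]
    field_simp
  have hfac : (∏ i ∈ Sp, u i) * ∏ i ∈ Sm, (ℏ - u i) =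
      qβ * ((∏ i ∈ Sp, (ℏ - u i)) * ∏ i ∈ Sm, u i) := by
    have h1 : ∀ i, ℏ - u i = ℏ * (1 + q i * tmon t (a i))⁻¹ := by
      intro i; rw [hsub i, div_eq_mul_inv]
    have h2 : ∀ i, u i = (ℏ * (1 + q i * tmon t (a i))⁻¹) * (q i * tmon t (a i)) := by
      intro i; rw [hu i]; field_simp
    rw [Finset.prod_congr rfl (fun i _ => h2 i), Finset.prod_congr rfl (fun i _ => h1 i),
      Finset.prod_congr (rfl : Sp = Sp) (fun i _ => h1 i),
      Finset.prod_congr (rfl : Sm = Sm) (fun i _ => h2 i),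
      ← mul_assoc]
    simp only [Finset.prod_mul_distrib]
    linear_combination ((∏ i ∈ Sp, ℏ) * (∏ i ∈ Sp, (1 + q i * tmon t (a i))⁻¹) *
      (∏ i ∈ Sm, ℏ) * ∏ i ∈ Sm, (1 + q i * tmon t (a i))⁻¹) * key
  rw [hfac, sub_self, zero_mul]
end
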